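/- Let (X,d) be a metric space and let φ : X → ℝ be bounded and constant outside some bounded set. Then the c-transform φ^c is real-valued, bounded, Lipschitz, and constant outside some bounded set. -/

import Mathlib

open Filter MeasureTheory Set Topology

/-- The `c`-transform for the cost `c(x,y) = d²(x,y)/2`:
`φᶜ(y) = inf_x ( d²(x,y)/2 - φ(x) )`, with values in `EReal`. -/
noncomputable def cTransform {X : Type*} [MetricSpace X] (φ : X → EReal) (y : X) : EReal :=
  ⨅ x : X, ((dist x y ^ 2 / 2 : ℝ) : EReal) - φ x

/-- If `φ : X → ℝ` is bounded and constant outside a bounded set, then its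
`c`-transform `φᶜ` is real-valued, bounded, Lipschitz, and constant outside a bounded set. -/
theorem stmt9 {X : Type*} [MetricSpace X] (φ : X → ℝ)
    (hb : ∃ M : ℝ, ∀ x, |φ x| ≤ M)
    (c : ℝ) (S : Set X) (hS : Bornology.IsBounded S) (hc : ∀ x ∉ S, φ x = c) :
    ∃ g : X → ℝ,
      (∀ y, cTransform (fun x => ((φ x : ℝ) : EReal)) y = (g y : EReal)) ∧
      (∃ M : ℝ, ∀ y, |g y| ≤ M) ∧
      (∃ K : NNReal, LipschitzWith K g) ∧
      (∃ (c' : ℝ) (S' : Set X), Bornology.IsBounded S' ∧ ∀ y ∉ S', g y = c') := by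
  rcases isEmpty_or_nonempty X with hX | hX
  · refine ⟨fun _ => 0, fun y => (IsEmpty.false y).elim, ⟨0, fun y => (IsEmpty.false y).elim⟩,
      ⟨0, ?_⟩, 0, ∅, Bornology.isBounded_empty, fun _ _ => rfl⟩
    intro y; exact (IsEmpty.false y).elim
  obtain ⟨M, hM⟩ := hb
  have hM0 : 0 ≤ M := le_trans (abs_nonneg _) (hM (Classical.arbitrary X))
  set f : X → X → ℝ := fun y x => dist x y ^ 2 / 2 - φ x with hf
  have hbdd : ∀ y : X, BddBelow (Set.range (f y)) := by
    intro y
    refine ⟨-M, ?_⟩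
    rintro _ ⟨x, rfl⟩
    have h1 : 0 ≤ dist x y ^ 2 / 2 := by positivity
    have h2 : φ x ≤ M := (abs_le.1 (hM x)).2
    simp only [hf]; linarith
  set g : X → ℝ := fun y => ⨅ x, f y x with hg
  have hlow : ∀ y, -M ≤ g y := fun y =>
    le_ciInf fun x => by
      have h1 : 0 ≤ dist x y ^ 2 / 2 := by positivity
      have h2 : φ x ≤ M := (abs_le.1 (hM x)).2
      simp only [hf]; linarith
  have hle : ∀ y x, g y ≤ f y x := fun y x => ciInf_le (hbdd y) x
  have hup : ∀ y, g y ≤ M := fun y => by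
    have := hle y y
    have h2 : -M ≤ φ y := (abs_le.1 (hM y)).1
    simp only [hf, dist_self] at this
    nlinarith
  refine ⟨g, ?_, ⟨M, fun y => abs_le.2 ⟨hlow y, hup y⟩⟩, ?_, ?_⟩
  · -- cTransform equals g as EReal
    intro y
    have hcont : ContinuousAt (fun r : ℝ => (r : EReal)) (g y) :=
      (EReal.continuous_coe_iff.mpr continuous_id).continuousAt
    have := EReal.coe_strictMono.monotone.map_ciInf_of_continuousAt hcont (hbdd y)
    rw [cTransform]
    rw [show (fun x => ((dist x y ^ 2 / 2 : ℝ) : EReal) - ((φ x : ℝ) : EReal))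
        = fun x => ((f y x : ℝ) : EReal) from funext fun x => by
          rw [hf]; exact (EReal.coe_sub _ _).symm]
    exact this.symm
  · -- Lipschitz
    set K : ℝ := Real.sqrt (4 * M + 2) + 1 + 2 * M with hK
    have hK0 : 0 ≤ K := by positivity
    refine ⟨⟨K, hK0⟩, LipschitzWith.of_dist_le_mul fun y₁ y₂ => ?_⟩
    have key : ∀ a b : X, g a - g b ≤ K * dist a b := by
      intro a b
      rcases le_or_gt 1 (dist a b) with hd | hd
      · have h1 : g a - g b ≤ 2 * M := by
          have := hlow b; have := hup a; linarith
        have h2 : 2 * M ≤ K * dist a b := by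
          have : 2 * M * 1 ≤ K * dist a b := by
            apply mul_le_mul _ hd (by norm_num) hK0
            have : 0 ≤ Real.sqrt (4 * M + 2) := Real.sqrt_nonneg _
            linarith
          linarith
        linarith
      · rw [sub_le_iff_le_add]
        refine le_of_forall_pos_le_add fun ε hε => ?_
        set ε' : ℝ := min ε 1 with hε'
        have hε'0 : 0 < ε' := lt_min hε zero_lt_one
        have hε'1 : ε' ≤ 1 := min_le_right _ _
        obtain ⟨x, hx⟩ : ∃ x, f b x < g b + ε' := by
          apply exists_lt_of_ciInf_lt
          linarith [hε'0]
        have hdxb : dist x b ≤ Real.sqrt (4 * M + 2) := by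
          have h2 : φ x ≤ M := (abs_le.1 (hM x)).2
          have hgb : g b ≤ M := hup b
          have : dist x b ^ 2 ≤ 4 * M + 2 := by
            simp only [hf] at hx; nlinarith
          calc dist x b = Real.sqrt (dist x b ^ 2) := by
                rw [Real.sqrt_sq dist_nonneg]
            _ ≤ Real.sqrt (4 * M + 2) := Real.sqrt_le_sqrt this
        have hdxa : dist x a ≤ Real.sqrt (4 * M + 2) + 1 := by
          calc dist x a ≤ dist x b + dist b a := dist_triangle _ _ _
            _ ≤ Real.sqrt (4 * M + 2) + 1 := by
                rw [dist_comm b a]; linarith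
        have hga : g a ≤ f a x := hle a x
        have hdiff : f a x - f b x ≤ K * dist a b := by
          have h1 : f a x - f b x = (dist x a - dist x b) * (dist x a + dist x b) / 2 := by
            simp only [hf]; ring
          have h2 : dist x a - dist x b ≤ dist a b := by
            have := abs_dist_sub_le a b x
            rw [abs_le, dist_comm a x, dist_comm b x] at this
            exact this.2
          have h3 : 0 ≤ dist x a + dist x b := by positivity
          have h4 : (dist x a - dist x b) * (dist x a + dist x b)
              ≤ dist a b * (dist x a + dist x b) :=
            mul_le_mul_of_nonneg_right h2 h3
          have h5 : dist x a + dist x b ≤ 2 * Real.sqrt (4 * M + 2) + 1 := by linarith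
          have h6 : dist a b * (dist x a + dist x b)
              ≤ dist a b * (2 * Real.sqrt (4 * M + 2) + 1) :=
            mul_le_mul_of_nonneg_left h5 dist_nonneg
          have h7 : dist a b * (2 * Real.sqrt (4 * M + 2) + 1) ≤ 2 * (K * dist a b) := by
            rw [hK]
            nlinarith [dist_nonneg (x := a) (y := b), Real.sqrt_nonneg (4 * M + 2), hd.le, hM0]
          calc f a x - f b x
              = (dist x a - dist x b) * (dist x a + dist x b) / 2 := h1
            _ ≤ dist a b * (dist x a + dist x b) / 2 := by linarith
            _ ≤ dist a b * (2 * Real.sqrt (4 * M + 2) + 1) / 2 := by linarith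
            _ ≤ K * dist a b := by
                rw [hK]
                nlinarith [dist_nonneg (x := a) (y := b), Real.sqrt_nonneg (4 * M + 2), hM0]
        have : g a ≤ g b + ε' + K * dist a b := by linarith [hx, hga]
        have hεε : ε' ≤ ε := min_le_left _ _
        linarith
    rw [Real.dist_eq, abs_sub_le_iff]
    constructor
    · have := key y₁ y₂
      change g y₁ - g y₂ ≤ K * dist y₁ y₂; linarith
    · have := key y₂ y₁
      rw [dist_comm y₂ y₁] at this
      change g y₂ - g y₁ ≤ K * dist y₁ y₂; linarith
  · -- constant outside a bounded set
    obtain ⟨z⟩ := id hX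
    obtain ⟨r, hr0, hSr⟩ : ∃ r, 0 ≤ r ∧ S ⊆ Metric.closedBall z r := by
      obtain ⟨r, hSr⟩ := (Metric.isBounded_iff_subset_closedBall z).1 hS
      exact ⟨max r 0, le_max_right _ _,
        hSr.trans (Metric.closedBall_subset_closedBall (le_max_left _ _))⟩
    set ρ : ℝ := Real.sqrt (2 * (M + |c|)) with hρ
    have hρ0 : 0 ≤ ρ := Real.sqrt_nonneg _
    refine ⟨-c, Metric.closedBall z (r + ρ), Metric.isBounded_closedBall, fun y hy => ?_⟩
    simp only [Metric.mem_closedBall, not_le] at hy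
    have hyS : y ∉ S := fun h => by
      have := hSr h
      simp only [Metric.mem_closedBall] at this
      linarith
    apply le_antisymm
    · have := hle y y
      simp only [hf, dist_self] at this
      rw [hc y hyS] at this
      simpa using this
    · refine le_ciInf fun x => ?_
      by_cases hxS : x ∈ S
      · have hdx : ρ ≤ dist x y := by
          have h1 : dist x z ≤ r := by simpa using hSr hxS
          have h2 : dist y z ≤ dist y x + dist x z := dist_triangle _ _ _
          rw [dist_comm y x] at h2
          linarith
        have h3 : 2 * (M + |c|) ≤ dist x y ^ 2 := by
          have := Real.sq_sqrt (by positivity : (0:ℝ) ≤ 2 * (M + |c|))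
          calc 2 * (M + |c|) = ρ ^ 2 := this.symm
            _ ≤ dist x y ^ 2 := by nlinarith [dist_nonneg (x := x) (y := y)]
        have h4 : φ x ≤ M := (abs_le.1 (hM x)).2
        have h5 : -c ≤ |c| := neg_le_abs c
        simp only [hf]; nlinarith
      · have h1 : 0 ≤ dist x y ^ 2 / 2 := by positivity
        simp only [hf, hc x hxS]; linarith
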